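/- Let r ≥ 2 be an integer radix and D ≥ 1. Let (x_k)_{k∈ℕ} be a sequence of reals that is Fejér monotone with respect to the single point x, i.e. |x_{k+1} − x| ≤ |x_k − x| for all k, and assume |x| ≤ 1 − 2·r^{-D}. If some element n of the sequence satisfies |x_n − x| ≤ r^{-D}/2, then there exists a choice of symmetric maximally redundant signed-digit radix-r representations of the sequence elements in which the first D digits of all elements from index n onward are stable: there exist digit sequences d^{(k)} : ℕ → ℤ for each k ≥ n with |d^{(k)}_i| ≤ r − 1 for all i, x_k = Σ_{i=0}^∞ d^{(k)}_i · r^{-(i+1)}, and d^{(k)}_i = d^{(n)}_i for all i < D and all k ≥ n. -/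

import Mathlib

open Finset Filter

noncomputable def sdig (r : ℕ) (s : ℝ) : ℤ := max (-((r : ℤ) - 1)) (min ((r : ℤ) - 1) ⌊(r : ℝ) * s⌋)

noncomputable def sstate (r : ℕ) (t : ℝ) : ℕ → ℝ
  | 0 => t
  | i + 1 => r * sstate r t i - sdig r (sstate r t i)

lemma sdig_abs_le (r : ℕ) (hr : 2 ≤ r) (s : ℝ) : |sdig r s| ≤ (r : ℤ) - 1 := by
  have h1 : (1 : ℤ) ≤ (r : ℤ) - 1 := by omega
  rw [abs_le]
  exact ⟨le_max_left _ _, max_le (by omega) (min_le_left _ _)⟩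

lemma sdig_step (r : ℕ) (hr : 2 ≤ r) (s : ℝ) (hs : |s| ≤ 1) :
    |(r : ℝ) * s - sdig r s| ≤ 1 := by
  have hrR : (1 : ℝ) ≤ (r : ℝ) := by exact_mod_cast Nat.one_le_of_lt hr
  have hu : |(r : ℝ) * s| ≤ r := by
    rw [abs_mul, abs_of_nonneg (by linarith : (0:ℝ) ≤ (r:ℝ))]
    nlinarith [abs_nonneg s]
  set u := (r : ℝ) * s with hudef
  have hu1 : -(r : ℝ) ≤ u := (abs_le.1 hu).1
  have hu2 : u ≤ r := (abs_le.1 hu).2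
  have hcast : (((r : ℤ) - 1 : ℤ) : ℝ) = (r : ℝ) - 1 := by push_cast; ring
  rcases le_or_gt ((r : ℝ) - 1) u with h1 | h1
  · have hfl : (r : ℤ) - 1 ≤ ⌊u⌋ := by
      rw [Int.le_floor, hcast]; exact h1
    have hd : sdig r s = (r : ℤ) - 1 := by
      unfold sdig
      rw [min_eq_left hfl, max_eq_right (by omega : -((r:ℤ)-1) ≤ (r:ℤ)-1)]
    rw [hd, abs_le]
    constructor <;> push_cast <;> linarith
  rcases le_or_gt u (-((r : ℝ) - 1)) with h2 | h2
  · have hfl : ⌊u⌋ ≤ -((r : ℤ) - 1) := by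
      have hc2 : ((-((r:ℤ)-1) : ℤ) : ℝ) = -((r:ℝ)-1) := by push_cast; ring
      calc ⌊u⌋ ≤ ⌊(((-((r:ℤ)-1) : ℤ) : ℝ))⌋ := Int.floor_le_floor (by rw [hc2]; exact h2)
        _ = -((r:ℤ)-1) := Int.floor_intCast _
    have hd : sdig r s = -((r : ℤ) - 1) := by
      unfold sdig
      rw [min_eq_right (by omega : ⌊u⌋ ≤ (r:ℤ)-1), max_eq_left hfl]
    rw [hd, abs_le]
    constructor <;> push_cast <;> linarith
  · have hf1 : (⌊u⌋ : ℝ) ≤ u := Int.floor_le u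
    have hf2 : u < ⌊u⌋ + 1 := Int.lt_floor_add_one u
    have hfl1 : ⌊u⌋ ≤ (r : ℤ) - 1 := by
      have h' : (⌊u⌋ : ℝ) < (((r:ℤ) - 1 : ℤ) : ℝ) := by rw [hcast]; linarith
      exact_mod_cast le_of_lt (by exact_mod_cast h')
    have hfl2 : -((r : ℤ) - 1) ≤ ⌊u⌋ := by
      have h' : (((-((r:ℤ)-1) : ℤ)) : ℝ) < ⌊u⌋ + 1 := by push_cast; linarith
      have h'' : -((r:ℤ)-1) < ⌊u⌋ + 1 := by exact_mod_cast h'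
      omega
    have hd : sdig r s = ⌊u⌋ := by
      unfold sdig
      rw [min_eq_right hfl1, max_eq_right hfl2]
    rw [hd, abs_le]
    constructor <;> linarith

lemma sstate_abs_le (r : ℕ) (hr : 2 ≤ r) (t : ℝ) (ht : |t| ≤ 1) :
    ∀ N, |sstate r t N| ≤ 1 := by
  intro N
  induction N with
  | zero => exact ht
  | succ N ih => exact sdig_step r hr _ ih

lemma rzpow_neg_eq (r : ℕ) (hr : 2 ≤ r) (N : ℕ) :
    (r : ℝ) ^ (-(N : ℤ)) = ((r : ℝ)⁻¹) ^ N := by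
  rw [zpow_neg, zpow_natCast, ← inv_pow]

lemma sstate_partial (r : ℕ) (hr : 2 ≤ r) (t : ℝ) :
    ∀ N, t - ∑ i ∈ range N, (sdig r (sstate r t i) : ℝ) * (r : ℝ) ^ (-(i + 1 : ℤ))
      = sstate r t N * (r : ℝ) ^ (-(N : ℤ)) := by
  have hr0 : (r : ℝ) ≠ 0 := by positivity
  intro N
  induction N with
  | zero => simp [sstate]
  | succ N ih =>
    rw [sum_range_succ]
    have hzp : (r : ℝ) * (r : ℝ) ^ (-(N + 1 : ℤ)) = (r : ℝ) ^ (-(N : ℤ)) := by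
      rw [show (-(N:ℤ)) = 1 + (-(N + 1 : ℤ)) by ring, zpow_add₀ hr0, zpow_one]
    have key : sstate r t (N + 1) * (r : ℝ) ^ (-(N + 1 : ℤ))
        = sstate r t N * (r : ℝ) ^ (-(N : ℤ))
          - (sdig r (sstate r t N) : ℝ) * (r : ℝ) ^ (-(N + 1 : ℤ)) := by
      show ((r : ℝ) * sstate r t N - (sdig r (sstate r t N) : ℝ)) * (r : ℝ) ^ (-(N + 1 : ℤ)) = _
      rw [sub_mul, mul_assoc, mul_left_comm, hzp]
    push_cast at key ⊢
    linarith [ih]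

lemma greedy_hasSum (r : ℕ) (hr : 2 ≤ r) (t : ℝ) (ht : |t| ≤ 1) :
    HasSum (fun i : ℕ => (sdig r (sstate r t i) : ℝ) * (r : ℝ) ^ (-(i + 1 : ℤ))) t := by
  have hr0 : (0 : ℝ) < r := by positivity
  have hr1 : (1 : ℝ) < r := by exact_mod_cast Nat.lt_of_lt_of_le Nat.one_lt_two hr
  have hinv0 : (0 : ℝ) ≤ (r : ℝ)⁻¹ := by positivity
  have hinv1 : (r : ℝ)⁻¹ < 1 := by rw [inv_lt_one_iff₀]; right; exact hr1
  set f : ℕ → ℝ := fun i => (sdig r (sstate r t i) : ℝ) * (r : ℝ) ^ (-(i + 1 : ℤ)) with hf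
  have hexp : ∀ i : ℕ, (r : ℝ) ^ (-(i + 1 : ℤ)) = ((r : ℝ)⁻¹) ^ i * (r:ℝ)⁻¹ := by
    intro i
    rw [show (-(i + 1 : ℤ)) = -((i + 1 : ℕ) : ℤ) by push_cast; ring,
      rzpow_neg_eq r hr, pow_succ]
  have hbound : ∀ i, ‖f i‖ ≤ ((r:ℝ)⁻¹) ^ i := by
    intro i
    have h1 : |(sdig r (sstate r t i) : ℝ)| ≤ (r : ℝ) := by
      have h := sdig_abs_le r hr (sstate r t i)
      have h' : |(sdig r (sstate r t i) : ℝ)| ≤ (((r : ℤ) - 1 : ℤ) : ℝ) := by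
        rw [← Int.cast_abs]; exact_mod_cast h
      push_cast at h'; linarith
    have hpos : (0:ℝ) ≤ ((r:ℝ)⁻¹) ^ i := by positivity
    rw [hf]
    simp only [Real.norm_eq_abs, abs_mul]
    rw [hexp i, abs_of_nonneg (by positivity : (0:ℝ) ≤ ((r:ℝ)⁻¹) ^ i * (r:ℝ)⁻¹)]
    calc |(sdig r (sstate r t i) : ℝ)| * (((r:ℝ)⁻¹) ^ i * (r:ℝ)⁻¹)
        ≤ (r : ℝ) * (((r:ℝ)⁻¹) ^ i * (r:ℝ)⁻¹) := by
          apply mul_le_mul_of_nonneg_right h1 (by positivity)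
      _ = ((r:ℝ)⁻¹) ^ i := by field_simp
  have hsummable : Summable fun i => ‖f i‖ :=
    Summable.of_nonneg_of_le (fun i => norm_nonneg _) hbound
      (summable_geometric_of_lt_one hinv0 hinv1)
  rw [hasSum_iff_tendsto_nat_of_summable_norm hsummable]
  rw [tendsto_iff_dist_tendsto_zero]
  apply squeeze_zero (fun N => dist_nonneg) _ 
    (tendsto_pow_atTop_nhds_zero_of_lt_one hinv0 hinv1)
  intro N
  rw [Real.dist_eq, ← abs_neg, neg_sub, sstate_partial r hr t N, abs_mul,
    abs_of_nonneg (by positivity : (0:ℝ) ≤ (r:ℝ) ^ (-(N:ℤ))), rzpow_neg_eq r hr]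
  have := sstate_abs_le r hr t ht N
  nlinarith [pow_nonneg hinv0 N]

lemma nat_digit_sum (r : ℕ) (hr : 2 ≤ r) (M : ℕ) :
    ∀ DD : ℕ, ∑ j ∈ range DD, (M / r ^ j % r) * r ^ j = M % r ^ DD := by
  intro DD
  induction DD with
  | zero => simp [Nat.mod_one]
  | succ DD ih =>
    rw [sum_range_succ, ih, pow_succ, Nat.mod_mul]
    ring

lemma prefix_sum_int (r DD : ℕ) (hr : 2 ≤ r) (m : ℤ) (hm : m.natAbs < r ^ DD) :
    ∑ i ∈ range DD,
      (if 0 ≤ m then (1:ℤ) else -1) * ((m.natAbs / r ^ (DD-1-i) % r : ℕ) : ℤ) * (r:ℤ) ^ (DD-1-i)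
      = m := by
  have hnat : ∑ i ∈ range DD, ((m.natAbs / r ^ (DD-1-i) % r) * r ^ (DD-1-i) : ℕ) = m.natAbs := by
    rw [Finset.sum_range_reflect (fun j => (m.natAbs / r ^ j % r) * r ^ j) DD,
      nat_digit_sum r hr m.natAbs DD, Nat.mod_eq_of_lt hm]
  have h2 : ∑ i ∈ range DD, ((m.natAbs / r ^ (DD-1-i) % r : ℕ) : ℤ) * (r:ℤ) ^ (DD-1-i)
      = (m.natAbs : ℤ) := by exact_mod_cast hnat
  calc ∑ i ∈ range DD,
      (if 0 ≤ m then (1:ℤ) else -1) * ((m.natAbs / r ^ (DD-1-i) % r : ℕ) : ℤ) * (r:ℤ) ^ (DD-1-i)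
      = (if 0 ≤ m then (1:ℤ) else -1)
        * ∑ i ∈ range DD, ((m.natAbs / r ^ (DD-1-i) % r : ℕ) : ℤ) * (r:ℤ) ^ (DD-1-i) := by
        rw [Finset.mul_sum]
        exact Finset.sum_congr rfl fun i _ => by ring
    _ = (if 0 ≤ m then (1:ℤ) else -1) * (m.natAbs : ℤ) := by rw [h2]
    _ = m := by
        rcases le_or_gt 0 m with h | h
        · simp [h, Int.natAbs_of_nonneg h]
        · rw [if_neg (not_le.2 h)]
          have : (m.natAbs : ℤ) = -m := by omega
          rw [this]; ring

lemma prefix_sum_real (r DD : ℕ) (hr : 2 ≤ r) (m : ℤ) (hm : m.natAbs < r ^ DD) :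
    ∑ i ∈ range DD,
      (((if 0 ≤ m then (1:ℤ) else -1) * ((m.natAbs / r ^ (DD-1-i) % r : ℕ) : ℤ) : ℤ) : ℝ)
        * (r:ℝ) ^ (-(i + 1 : ℤ))
      = (m : ℝ) * (r:ℝ) ^ (-(DD : ℤ)) := by
  have hr0 : (r : ℝ) ≠ 0 := by positivity
  have step : ∀ i ∈ range DD,
      (((if 0 ≤ m then (1:ℤ) else -1) * ((m.natAbs / r ^ (DD-1-i) % r : ℕ) : ℤ) : ℤ) : ℝ)
        * (r:ℝ) ^ (-(i + 1 : ℤ))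
      = ((((if 0 ≤ m then (1:ℤ) else -1) * ((m.natAbs / r ^ (DD-1-i) % r : ℕ) : ℤ)
            * (r:ℤ) ^ (DD-1-i) : ℤ)) : ℝ) * (r:ℝ) ^ (-(DD : ℤ)) := by
    intro i hi
    have hiD : i < DD := mem_range.1 hi
    have hexp : (r:ℝ) ^ (-(i + 1 : ℤ)) = (r:ℝ) ^ (DD-1-i) * (r:ℝ) ^ (-(DD : ℤ)) := by
      rw [← zpow_natCast (r:ℝ) (DD-1-i), ← zpow_add₀ hr0]
      congr 1
      have : ((DD-1-i : ℕ) : ℤ) = (DD : ℤ) - 1 - i := by omega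
      omega
    rw [hexp, Int.cast_mul]
    push_cast
    ring
  rw [Finset.sum_congr rfl step, ← Finset.sum_mul]
  congr 1
  have hi := prefix_sum_int r DD hr m hm
  calc ∑ i ∈ range DD,
      ((((if 0 ≤ m then (1:ℤ) else -1) * ((m.natAbs / r ^ (DD-1-i) % r : ℕ) : ℤ)
            * (r:ℤ) ^ (DD-1-i) : ℤ)) : ℝ)
      = ((∑ i ∈ range DD,
          ((if 0 ≤ m then (1:ℤ) else -1) * ((m.natAbs / r ^ (DD-1-i) % r : ℕ) : ℤ)
            * (r:ℤ) ^ (DD-1-i)) : ℤ) : ℝ) := by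
        rw [Int.cast_sum]
    _ = (m : ℝ) := by rw [hi]

/-- Theorem 1 of the paper, scalar case: a Fejér monotone real
sequence with limit point `x` develops `D` stable most-significant digits in the
symmetric maximally redundant signed-digit radix-`r` representation once an
element comes within `r^(-D)/2` of `x`. -/
theorem fejer_monotone_digit_stability
    (r D : ℕ) (hr : 2 ≤ r) (hD : 1 ≤ D)
    (x : ℕ → ℝ) (xs : ℝ)
    (hfejer : ∀ k : ℕ, |x (k + 1) - xs| ≤ |x k - xs|)
    (hxs : |xs| ≤ 1 - 2 * (r : ℝ) ^ (-(D : ℤ)))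
    (n : ℕ) (hn : |x n - xs| ≤ (r : ℝ) ^ (-(D : ℤ)) / 2) :
    ∃ d : ℕ → ℕ → ℤ, ∀ k : ℕ, n ≤ k →
      (∀ i, |d k i| ≤ (r : ℤ) - 1) ∧
      HasSum (fun i : ℕ => (d k i : ℝ) * (r : ℝ) ^ (-(i + 1 : ℤ))) (x k) ∧
      (∀ i < D, d k i = d n i) := by
  have hr0 : (0 : ℝ) < r := by positivity
  have hrne : (r : ℝ) ≠ 0 := ne_of_gt hr0
  set ρ : ℝ := (r : ℝ) ^ (-(D : ℤ)) with hρdef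
  have hρ0 : 0 < ρ := by positivity
  have hcancel : (r : ℝ) ^ (D : ℤ) * ρ = 1 := by
    rw [hρdef, ← zpow_add₀ hrne]; simp
  set m : ℤ := round (xs * (r : ℝ) ^ (D : ℤ)) with hmdef
  set a : ℝ := (m : ℝ) * ρ with hadef
  have hround : |xs * (r : ℝ) ^ (D : ℤ) - m| ≤ 1 / 2 := abs_sub_round _
  have hxsa : |xs - a| ≤ ρ / 2 := by
    have : xs - a = (xs * (r : ℝ) ^ (D : ℤ) - m) * ρ := by
      rw [hadef, sub_mul, mul_assoc, hcancel, mul_one]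
    rw [this, abs_mul, abs_of_pos hρ0]
    nlinarith
  have hb : ∀ k, n ≤ k → |x k - xs| ≤ ρ / 2 := by
    intro k hk
    induction k, hk using Nat.le_induction with
    | base => exact hn
    | succ k hk ih => exact le_trans (hfejer k) ih
  have hka : ∀ k, n ≤ k → |x k - a| ≤ ρ := by
    intro k hk
    calc |x k - a| ≤ |x k - xs| + |xs - a| := abs_sub_le _ _ _
      _ ≤ ρ / 2 + ρ / 2 := add_le_add (hb k hk) hxsa
      _ = ρ := by ring
  have hrD1 : (1 : ℝ) ≤ (r : ℝ) ^ (D : ℤ) := by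
    apply one_le_zpow₀ (by exact_mod_cast Nat.one_le_of_lt hr)
    positivity
  have hM : m.natAbs < r ^ D := by
    have h1 : |(m : ℝ)| ≤ |xs * (r : ℝ) ^ (D : ℤ)| + 1 / 2 := by
      have := abs_sub_abs_le_abs_sub (m : ℝ) (xs * (r : ℝ) ^ (D : ℤ))
      rw [abs_sub_comm] at this
      linarith [hround, this]
    have h2 : |xs * (r : ℝ) ^ (D : ℤ)| ≤ (r : ℝ) ^ (D : ℤ) - 2 := by
      rw [abs_mul, abs_of_pos (by positivity : (0:ℝ) < (r : ℝ) ^ (D : ℤ))]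
      have := mul_le_mul_of_nonneg_right hxs (le_of_lt (by positivity : (0:ℝ) < (r : ℝ) ^ (D : ℤ)))
      calc |xs| * (r : ℝ) ^ (D : ℤ) ≤ (1 - 2 * ρ) * (r : ℝ) ^ (D : ℤ) := this
        _ = (r : ℝ) ^ (D : ℤ) - 2 * (ρ * (r : ℝ) ^ (D : ℤ)) := by ring
        _ = (r : ℝ) ^ (D : ℤ) - 2 := by rw [mul_comm ρ, hcancel]; ring
    have h3 : |(m : ℝ)| < (r : ℝ) ^ (D : ℤ) := by linarith
    have hzr : (r:ℝ) ^ (D : ℤ) = ((r ^ D : ℕ) : ℝ) := by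
      rw [zpow_natCast]; push_cast; ring
    have hna : ((m.natAbs : ℕ) : ℝ) = |(m:ℝ)| := by
      rw [Nat.cast_natAbs, Int.cast_abs]
    have h6 : ((m.natAbs : ℕ) : ℝ) < ((r ^ D : ℕ) : ℝ) := by rw [hna, ← hzr]; exact h3
    exact_mod_cast h6
  -- digit definition
  refine ⟨fun k i => if i < D then
      (if 0 ≤ m then (1:ℤ) else -1) * ((m.natAbs / r ^ (D-1-i) % r : ℕ) : ℤ)
    else sdig r (sstate r ((x k - a) * (r : ℝ) ^ (D : ℤ)) (i - D)), ?_⟩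
  intro k hk
  have ht : |(x k - a) * (r : ℝ) ^ (D : ℤ)| ≤ 1 := by
    rw [abs_mul, abs_of_pos (by positivity : (0:ℝ) < (r : ℝ) ^ (D : ℤ))]
    calc |x k - a| * (r : ℝ) ^ (D : ℤ) ≤ ρ * (r : ℝ) ^ (D : ℤ) :=
        mul_le_mul_of_nonneg_right (hka k hk) (by positivity)
      _ = 1 := by rw [mul_comm]; exact hcancel
  refine ⟨?_, ?_, ?_⟩
  · intro i
    by_cases hi : i < D
    · simp only [if_pos hi]
      have hlt : m.natAbs / r ^ (D-1-i) % r < r := Nat.mod_lt _ (by omega)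
      have hle : ((m.natAbs / r ^ (D-1-i) % r : ℕ) : ℤ) ≤ (r : ℤ) - 1 := by
        have := Nat.le_sub_one_of_lt hlt
        omega
      rcases le_or_gt 0 m with h | h
      · rw [if_pos h, one_mul]
        rw [abs_of_nonneg (by positivity)]
        exact hle
      · rw [if_neg (not_le.2 h), neg_one_mul, abs_neg]
        rw [abs_of_nonneg (by positivity)]
        exact hle
    · simp only [if_neg hi]
      exact sdig_abs_le r hr _
  · -- HasSum
    have htail := (greedy_hasSum r hr _ ht).mul_right ρ
    have htk : (x k - a) * (r : ℝ) ^ (D : ℤ) * ρ = x k - a := by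
      rw [mul_assoc, hcancel, mul_one]
    rw [htk] at htail
    have hfun : (fun j : ℕ => (sdig r (sstate r ((x k - a) * (r : ℝ) ^ (D : ℤ)) j) : ℝ)
          * (r : ℝ) ^ (-(j + 1 : ℤ)) * ρ)
        = fun j : ℕ =>
          ((if j + D < D then
              (if 0 ≤ m then (1:ℤ) else -1) * ((m.natAbs / r ^ (D-1-(j+D)) % r : ℕ) : ℤ)
            else sdig r (sstate r ((x k - a) * (r : ℝ) ^ (D : ℤ)) ((j + D) - D)) : ℤ) : ℝ)
          * (r : ℝ) ^ (-((j + D : ℕ) + 1 : ℤ)) := by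
      funext j
      rw [if_neg (by omega), Nat.add_sub_cancel]
      rw [hρdef, mul_assoc, ← zpow_add₀ hrne]
      congr 2
      push_cast
      ring
    rw [hfun] at htail
    have := (hasSum_nat_add_iff (f := fun i : ℕ =>
      ((if i < D then
          (if 0 ≤ m then (1:ℤ) else -1) * ((m.natAbs / r ^ (D-1-i) % r : ℕ) : ℤ)
        else sdig r (sstate r ((x k - a) * (r : ℝ) ^ (D : ℤ)) (i - D)) : ℤ) : ℝ)
      * (r : ℝ) ^ (-(i + 1 : ℤ))) D).mp htail
    have hpref : ∑ i ∈ Finset.range D,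
        ((if i < D then
            (if 0 ≤ m then (1:ℤ) else -1) * ((m.natAbs / r ^ (D-1-i) % r : ℕ) : ℤ)
          else sdig r (sstate r ((x k - a) * (r : ℝ) ^ (D : ℤ)) (i - D)) : ℤ) : ℝ)
        * (r : ℝ) ^ (-(i + 1 : ℤ)) = a := by
      rw [hadef, ← prefix_sum_real r D hr m hM]
      exact Finset.sum_congr rfl fun i hi => by
        rw [if_pos (Finset.mem_range.1 hi)]
    rw [hpref] at this
    convert this using 1
    · rfl
    · ring
  · intro i hi
    simp only [if_pos hi]
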